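/- Let X be a finite nonempty alphabet and p a probability distribution on X. Then H*(p) = 0 if and only if there exists x ∈ X with p(x) = 1. -/

import Mathlib

/-- Lin entropy of a distribution on a finite alphabet. -/
noncomputable def linEntropy {X : Type*} [Fintype X] (p : X → ℝ) : ℝ :=
  ∑ x, p x * ((1 / 2) * Real.logb 2 (4 * p x ^ p x / (p x + 1) ^ (p x + 1)))

private lemma phi_strictAnti :
    StrictAntiOn (fun t : ℝ => t * Real.log t - (t + 1) * Real.log (t + 1)) (Set.Icc 0 1) := by
  apply strictAntiOn_of_deriv_neg (convex_Icc 0 1)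
  · exact (Real.continuous_mul_log.sub
      (Real.continuous_mul_log.comp (continuous_id.add continuous_const))).continuousOn
  · intro x hx
    rw [interior_Icc] at hx
    have hx0 : (0:ℝ) < x := hx.1
    have hd1 : HasDerivAt (fun t : ℝ => t * Real.log t) (Real.log x + 1) x :=
      Real.hasDerivAt_mul_log hx0.ne'
    have hd2 : HasDerivAt (fun t : ℝ => (t + 1) * Real.log (t + 1))
        ((Real.log (x + 1) + 1) * 1) x :=
      by have h := (Real.hasDerivAt_mul_log (by linarith : x + 1 ≠ 0)).comp x
            ((hasDerivAt_id x).add_const 1)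
         exact h
    have hd : HasDerivAt (fun t : ℝ => t * Real.log t - (t + 1) * Real.log (t + 1))
        (Real.log x - Real.log (x + 1)) x := by
      have : HasDerivAt (fun t : ℝ => t * Real.log t - (t + 1) * Real.log (t + 1)) (Real.log x + 1 - (Real.log (x + 1) + 1) * 1) x := hd1.sub hd2
      convert this using 1; ring
    rw [hd.deriv]
    have := Real.log_lt_log hx0 (by linarith : x < x + 1)
    linarith

private lemma log_pos_of_lt_one {t : ℝ} (ht0 : 0 < t) (ht1 : t < 1) :
    0 < Real.log (4 * t ^ t / (t + 1) ^ (t + 1)) := by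
  have ht1' : (0:ℝ) < t + 1 := by linarith
  have hlog : Real.log (4 * t ^ t / (t + 1) ^ (t + 1)) =
      2 * Real.log 2 + (t * Real.log t - (t + 1) * Real.log (t + 1)) := by
    rw [Real.log_div (by positivity) (by positivity),
      Real.log_mul (by norm_num) (by positivity),
      Real.log_rpow ht0, Real.log_rpow ht1',
      show (4:ℝ) = 2 ^ 2 by norm_num, Real.log_pow]
    push_cast; ring
  rw [hlog]
  have hmem1 : t ∈ Set.Icc (0:ℝ) 1 := ⟨ht0.le, ht1.le⟩
  have hmem2 : (1:ℝ) ∈ Set.Icc (0:ℝ) 1 := by norm_num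
  have := phi_strictAnti hmem1 hmem2 ht1
  simp only [Real.log_one, mul_zero, one_mul] at this
  have h2 : Real.log (1 + 1) = Real.log 2 := by norm_num
  rw [h2] at this
  linarith

private lemma term_one : (1:ℝ) * ((1 / 2) * Real.logb 2 (4 * (1:ℝ) ^ (1:ℝ) / ((1:ℝ) + 1) ^ ((1:ℝ) + 1))) = 0 := by
  have h1 : (4 * (1:ℝ) ^ (1:ℝ) / ((1:ℝ) + 1) ^ ((1:ℝ) + 1)) = 1 := by
    rw [Real.one_rpow, show (1:ℝ) + 1 = 2 by norm_num,
      show (2:ℝ) ^ (2:ℝ) = 4 by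
        rw [show (2:ℝ) = ((2:ℕ):ℝ) by norm_num, Real.rpow_natCast]; norm_num]
    norm_num
  rw [h1, Real.logb_one]; ring

private lemma term_nonneg {t : ℝ} (ht0 : 0 ≤ t) (ht1 : t ≤ 1) :
    0 ≤ t * ((1 / 2) * Real.logb 2 (4 * t ^ t / (t + 1) ^ (t + 1))) := by
  rcases eq_or_lt_of_le ht0 with h | h
  · simp [← h]
  rcases eq_or_lt_of_le ht1 with h1 | h1
  · rw [h1]; rw [term_one]
  · have hlog := log_pos_of_lt_one h h1
    have : 0 < Real.logb 2 (4 * t ^ t / (t + 1) ^ (t + 1)) := by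
      rw [Real.logb, div_pos_iff]
      left; exact ⟨hlog, Real.log_pos (by norm_num)⟩
    positivity

theorem linEntropy_eq_zero_iff
    {X : Type*} [Fintype X] [Nonempty X] (p : X → ℝ)
    (hp : ∀ x, 0 ≤ p x) (hsum : ∑ x, p x = 1) :
    linEntropy p = 0 ↔ ∃ x, p x = 1 := by
  classical
  have hle : ∀ x, p x ≤ 1 := fun x => by
    calc p x ≤ ∑ y, p y := Finset.single_le_sum (fun i _ => hp i) (Finset.mem_univ x)
    _ = 1 := hsum
  constructor
  · intro h0
    have hterm : ∀ x ∈ Finset.univ, p x * ((1 / 2) * Real.logb 2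
        (4 * p x ^ p x / (p x + 1) ^ (p x + 1))) = 0 := by
      rw [← Finset.sum_eq_zero_iff_of_nonneg (fun x _ => term_nonneg (hp x) (hle x))]
      exact h0
    by_contra hno
    push_neg at hno
    have hz : ∀ x, p x = 0 := by
      intro x
      have hx1 : p x < 1 := lt_of_le_of_ne (hle x) (hno x)
      by_contra hx0
      have hx0' : 0 < p x := lt_of_le_of_ne (hp x) (Ne.symm hx0)
      have := hterm x (Finset.mem_univ x)
      have hlog := log_pos_of_lt_one hx0' hx1
      have hlogb : 0 < Real.logb 2 (4 * p x ^ p x / (p x + 1) ^ (p x + 1)) := by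
        rw [Real.logb, div_pos_iff]
        left; exact ⟨hlog, Real.log_pos (by norm_num)⟩
      have : (0:ℝ) < p x * ((1 / 2) * Real.logb 2
          (4 * p x ^ p x / (p x + 1) ^ (p x + 1))) := by positivity
      linarith [hterm x (Finset.mem_univ x)]
    rw [Finset.sum_congr rfl (fun x _ => hz x)] at hsum
    simp at hsum
  · rintro ⟨x, hx⟩
    have hrest : ∀ y ∈ Finset.univ.erase x, p y = 0 := by
      have hsplit : p x + ∑ y ∈ Finset.univ.erase x, p y = 1 := by
        rw [Finset.add_sum_erase _ _ (Finset.mem_univ x)]; exact hsum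
      rw [hx] at hsplit
      have : ∑ y ∈ Finset.univ.erase x, p y = 0 := by linarith
      exact fun y hy => (Finset.sum_eq_zero_iff_of_nonneg (fun i _ => hp i)).mp this y hy
    unfold linEntropy
    apply Finset.sum_eq_zero
    intro y _
    by_cases hyx : y = x
    · rw [hyx, hx]; exact term_one
    · rw [hrest y (Finset.mem_erase.mpr ⟨hyx, Finset.mem_univ y⟩)]
      simp
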